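/- (Monotonicity and convergence of the throughput bounds, case p11 ≥ p01.) Let 0 ≤ p01 ≤ p11 < 1, p10 = 1 − p11, ω_o = p01/(p01 + p10). For an integer N ≥ 2 define C(N) = ω_o·(1 − (p11 − p01)^N), D(N) = ω_o·(1 − (p11 − p01)^{N+1}·(1 − p11)/(1 − p11² + p11·p01)), the lower bound LB(N) = C(N)/(C(N) + (1 − D(N) + C(N))·(1 − p11)), and the upper bound UB = ω_o/(1 − p11 + ω_o). Then for every N ≥ 2: LB(N) ≤ LB(N+1) and LB(N) ≤ UB; moreover LB(N) converges to UB as N → ∞. -/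
import Mathlib

private lemma frac_mono (q C1 C2 D1 D2 : ℝ) (hq : 0 < q) (hC1 : 0 ≤ C1)
    (hC12 : C1 ≤ C2) (hD12 : D1 ≤ D2) (hD2 : D2 < 1) :
    C1 / (C1 + (1 - D1 + C1) * q) ≤ C2 / (C2 + (1 - D2 + C2) * q) := by
  have h1 : 0 < C1 + (1 - D1 + C1) * q := by nlinarith
  have h2 : 0 < C2 + (1 - D2 + C2) * q := by nlinarith
  rw [div_le_div_iff₀ h1 h2]
  nlinarith [mul_nonneg (mul_nonneg (sub_nonneg.2 hC12) (by linarith : (0:ℝ) ≤ 1 - D2)) hq.le,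
    mul_nonneg (mul_nonneg (hC1.trans hC12) (sub_nonneg.2 hD12)) hq.le]

/-- Monotonicity and convergence of the throughput bounds for `p11 ≥ p01`: the lower bound
`LB(N)` is nondecreasing in `N`, never exceeds the upper bound `UB`, and converges to `UB`
as the number of channels `N → ∞`. -/
theorem throughput_bounds_monotone_pos
    (p01 p11 p10 ωo : ℝ)
    (h0 : 0 ≤ p01) (h01 : p01 ≤ p11) (h1 : p11 < 1)
    (hp10 : p10 = 1 - p11) (hωo : ωo = p01 / (p01 + p10))
    (C D LB : ℕ → ℝ) (UB : ℝ)
    (hC : ∀ N, 2 ≤ N → C N = ωo * (1 - (p11 - p01) ^ N))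
    (hD : ∀ N, 2 ≤ N → D N = ωo *
      (1 - (p11 - p01) ^ (N + 1) * (1 - p11) / (1 - p11 ^ 2 + p11 * p01)))
    (hLB : ∀ N, 2 ≤ N → LB N = C N / (C N + (1 - D N + C N) * (1 - p11)))
    (hUB : UB = ωo / (1 - p11 + ωo)) :
    (∀ N, 2 ≤ N → LB N ≤ LB (N + 1) ∧ LB N ≤ UB) ∧
    Filter.Tendsto LB Filter.atTop (nhds UB) := by
  set r : ℝ := p11 - p01 with hrdef
  have hq : (0:ℝ) < 1 - p11 := by linarith
  have hr0 : 0 ≤ r := by simp [hrdef]; linarith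
  have hr1 : r < 1 := by simp [hrdef]; linarith
  have hsum : 0 < p01 + p10 := by rw [hp10]; linarith
  have hω0 : 0 ≤ ωo := by rw [hωo]; positivity
  have hω1 : ωo < 1 := by
    rw [hωo, div_lt_one hsum, hp10]; linarith
  have hden : (0:ℝ) < 1 - p11 ^ 2 + p11 * p01 := by nlinarith
  -- basic bounds on powers
  have hpow0 : ∀ n : ℕ, (0:ℝ) ≤ r ^ n := fun n => pow_nonneg hr0 n
  have hpow1 : ∀ n : ℕ, r ^ n ≤ 1 := fun n => pow_le_one₀ hr0 hr1.le
  have hpowmono : ∀ n : ℕ, r ^ (n + 1) ≤ r ^ n := fun n =>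
    pow_le_pow_of_le_one hr0 hr1.le (Nat.le_succ n)
  have hCpos : ∀ N, 2 ≤ N → 0 ≤ C N := by
    intro N hN; rw [hC N hN]
    have := hpow1 N; nlinarith
  have hCω : ∀ N, 2 ≤ N → C N ≤ ωo := by
    intro N hN; rw [hC N hN]
    have := hpow0 N; nlinarith
  have hCmono : ∀ N, 2 ≤ N → C N ≤ C (N + 1) := by
    intro N hN
    rw [hC N hN, hC (N + 1) (by omega)]
    have := hpowmono N; nlinarith
  have hsnn : ∀ n : ℕ, 0 ≤ r ^ (n + 1) * (1 - p11) / (1 - p11 ^ 2 + p11 * p01) := by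
    intro n; positivity
  have hDω : ∀ N, 2 ≤ N → D N ≤ ωo := by
    intro N hN; rw [hD N hN]
    have := hsnn N; nlinarith
  have hDmono : ∀ N, 2 ≤ N → D N ≤ D (N + 1) := by
    intro N hN
    rw [hD N hN, hD (N + 1) (by omega)]
    have h := hpowmono (N + 1)
    have h2 : r ^ (N + 1 + 1) * (1 - p11) / (1 - p11 ^ 2 + p11 * p01)
        ≤ r ^ (N + 1) * (1 - p11) / (1 - p11 ^ 2 + p11 * p01) := by
      exact (div_le_div_iff_of_pos_right hden).mpr (mul_le_mul_of_nonneg_right h hq.le)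
    nlinarith
  have hUB' : UB = ωo / (ωo + (1 - ωo + ωo) * (1 - p11)) := by
    rw [hUB]; ring_nf
  constructor
  · intro N hN
    constructor
    · rw [hLB N hN, hLB (N + 1) (by omega)]
      exact frac_mono _ _ _ _ _ hq (hCpos N hN) (hCmono N hN) (hDmono N hN)
        (lt_of_le_of_lt (hDω (N + 1) (by omega)) hω1)
    · rw [hLB N hN, hUB']
      exact frac_mono _ _ _ _ _ hq (hCpos N hN) (hCω N hN) (hDω N hN) hω1
  · have htpow : Filter.Tendsto (fun n : ℕ => r ^ n) Filter.atTop (nhds 0) :=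
      tendsto_pow_atTop_nhds_zero_of_lt_one hr0 hr1
    have hCt : Filter.Tendsto C Filter.atTop (nhds ωo) := by
      have : Filter.Tendsto (fun n : ℕ => ωo * (1 - r ^ n)) Filter.atTop
          (nhds (ωo * (1 - 0))) :=
        Filter.Tendsto.const_mul _ (tendsto_const_nhds.sub htpow)
      simp only [sub_zero, mul_one] at this
      refine this.congr' ?_
      filter_upwards [Filter.eventually_ge_atTop 2] with N hN
      exact (hC N hN).symm
    have hDt : Filter.Tendsto D Filter.atTop (nhds ωo) := by
      have hpt : Filter.Tendsto (fun n : ℕ => r ^ (n + 1) * (1 - p11) /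
          (1 - p11 ^ 2 + p11 * p01)) Filter.atTop (nhds (0 * (1 - p11) /
          (1 - p11 ^ 2 + p11 * p01))) := by
        exact Filter.Tendsto.div_const (Filter.Tendsto.mul_const _
          (htpow.comp (Filter.tendsto_add_atTop_nat 1))) _
      simp only [zero_mul, zero_div] at hpt
      have : Filter.Tendsto (fun n : ℕ => ωo * (1 - r ^ (n + 1) * (1 - p11) /
          (1 - p11 ^ 2 + p11 * p01))) Filter.atTop (nhds (ωo * (1 - 0))) :=
        Filter.Tendsto.const_mul _ (tendsto_const_nhds.sub hpt)
      simp only [sub_zero, mul_one] at this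
      refine this.congr' ?_
      filter_upwards [Filter.eventually_ge_atTop 2] with N hN
      exact (hD N hN).symm
    have hdenlim : ωo + (1 - ωo + ωo) * (1 - p11) ≠ 0 := by nlinarith
    have hmain : Filter.Tendsto (fun N => C N / (C N + (1 - D N + C N) * (1 - p11)))
        Filter.atTop (nhds (ωo / (ωo + (1 - ωo + ωo) * (1 - p11)))) := by
      exact Filter.Tendsto.div hCt
        (hCt.add (((tendsto_const_nhds.sub hDt).add hCt).mul tendsto_const_nhds)) hdenlim
    rw [hUB']
    refine hmain.congr' ?_
    filter_upwards [Filter.eventually_ge_atTop 2] with N hN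
    exact (hLB N hN).symm
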